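/- Let γ be a closed rectifiable curve in ℝ² of length L, and let ρ > 0. Then the Lebesgue measure (area) of the set of points of ℝ² at distance at most ρ from the image of γ is at most 2ρL + πρ². -/

import Mathlib

open Set Metric MeasureTheory Real

lemma lune_zero (d r : ℝ) (hr : 0 ≤ r) (hd : 0 ≤ d) :
    volume (closedBall (EuclideanSpace.single (1 : Fin 2) d) r \
        closedBall (0 : EuclideanSpace ℝ (Fin 2)) r)
      ≤ ENNReal.ofReal (2 * r * d) := by
  set T : EuclideanSpace ℝ (Fin 2) ≃ᵐ ℝ × ℝ :=
    (MeasurableEquiv.toLp 2 (Fin 2 → ℝ)).symm.trans MeasurableEquiv.finTwoArrow with hT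
  have hTmp : MeasurePreserving T volume volume :=
    (volume_preserving_finTwoArrow ℝ).comp (EuclideanSpace.volume_preserving_symm_measurableEquiv_toLp (Fin 2))
  set S' : Set (ℝ × ℝ) :=
    {p : ℝ × ℝ | p.1 ^ 2 + (p.2 - d) ^ 2 ≤ r ^ 2} \ {p : ℝ × ℝ | p.1 ^ 2 + p.2 ^ 2 ≤ r ^ 2} with hS'
  have hmeas : MeasurableSet S' := by
    apply MeasurableSet.diff <;>
    · apply measurableSet_le <;> fun_prop
  have hball : ∀ (c x : EuclideanSpace ℝ (Fin 2)),
      x ∈ closedBall c r ↔ (x 0 - c 0) ^ 2 + (x 1 - c 1) ^ 2 ≤ r ^ 2 := by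
    intro c x
    rw [mem_closedBall, show dist x c = Real.sqrt ((x 0 - c 0) ^ 2 + (x 1 - c 1) ^ 2) by
      rw [EuclideanSpace.dist_eq, Fin.sum_univ_two]; simp [Real.dist_eq, sq_abs],
      Real.sqrt_le_iff]
    constructor
    · exact fun h => h.2
    · exact fun h => ⟨hr, h⟩
  have hpre : closedBall (EuclideanSpace.single (1 : Fin 2) d) r \
      closedBall (0 : EuclideanSpace ℝ (Fin 2)) r = T ⁻¹' S' := by
    ext x
    simp only [hS', mem_diff, mem_preimage, mem_setOf_eq, hball]
    have h0 : T x = (x 0, x 1) := rfl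
    rw [h0]
    simp [EuclideanSpace.single_apply]
  rw [hpre, hTmp.measure_preimage hmeas.nullMeasurableSet]
  rw [Measure.volume_eq_prod, Measure.prod_apply hmeas]
  have hslice : ∀ u : ℝ, volume (Prod.mk u ⁻¹' S')
      ≤ Set.indicator (Icc (-r) r) (fun _ => ENNReal.ofReal d) u := by
    intro u
    by_cases hu : u ∈ Icc (-r) r
    · rw [Set.indicator_of_mem hu]
      set s := Real.sqrt (r ^ 2 - u ^ 2) with hs
      have hs2 : s ^ 2 = r ^ 2 - u ^ 2 := Real.sq_sqrt (by nlinarith [hu.1, hu.2])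
      have hsnn : 0 ≤ s := Real.sqrt_nonneg _
      have : Prod.mk u ⁻¹' S' ⊆ Ioc s (d + s) := by
        intro v hv
        simp only [hS', mem_preimage, mem_diff, mem_setOf_eq] at hv
        obtain ⟨h1, h2⟩ := hv
        push_neg at h2
        have hvd : (v - d) ^ 2 ≤ s ^ 2 := by nlinarith
        have hv2 : s ^ 2 < v ^ 2 := by nlinarith
        have hle : v ≤ d + s := by nlinarith
        have hge : d - s ≤ v := by nlinarith
        refine ⟨?_, hle⟩
        by_contra hvs
        push_neg at hvs
        nlinarith
      calc volume (Prod.mk u ⁻¹' S') ≤ volume (Ioc s (d + s)) := measure_mono this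
        _ = ENNReal.ofReal d := by rw [Real.volume_Ioc]; ring_nf
    · rw [Set.indicator_of_notMem hu]
      have hemp : Prod.mk u ⁻¹' S' = ∅ := by
        ext v
        simp only [hS', mem_preimage, mem_diff, mem_setOf_eq, mem_empty_iff_false, iff_false]
        rintro ⟨h1, -⟩
        simp only [mem_Icc, not_and_or, not_le] at hu
        rcases hu with hu | hu <;> nlinarith
      simp [hemp]
  calc ∫⁻ u, volume (Prod.mk u ⁻¹' S') ∂volume
      ≤ ∫⁻ u, Set.indicator (Icc (-r) r) (fun _ => ENNReal.ofReal d) u ∂volume :=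
        lintegral_mono hslice
    _ = ENNReal.ofReal d * volume (Icc (-r) r) := by
        rw [lintegral_indicator measurableSet_Icc]; simp [mul_comm]
    _ ≤ ENNReal.ofReal (2 * r * d) := by
        rw [Real.volume_Icc, ← ENNReal.ofReal_mul (by positivity)]
        apply ENNReal.ofReal_le_ofReal; nlinarith

lemma lune (a b : EuclideanSpace ℝ (Fin 2)) (r : ℝ) (hr : 0 ≤ r) :
    volume (closedBall b r \ closedBall a r) ≤ ENNReal.ofReal (2 * r * dist a b) := by
  set d := dist a b with hd
  have hd0 : 0 ≤ d := dist_nonneg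
  -- translate by a
  have htrans : (· + a) ⁻¹' (closedBall b r \ closedBall a r)
      = closedBall (b - a) r \ closedBall 0 r := by
    ext x
    simp [mem_closedBall, dist_add_right, sub_eq_add_neg]
  have hvol1 : volume (closedBall b r \ closedBall a r)
      = volume (closedBall (b - a) r \ closedBall 0 r) := by
    rw [← htrans, (measurePreserving_add_right volume a).measure_preimage
      (measurableSet_closedBall.diff measurableSet_closedBall).nullMeasurableSet]
  -- rotate b - a to the vertical axis
  have hnorm : ‖b - a‖ = ‖EuclideanSpace.single (1 : Fin 2) d‖ := by
    rw [EuclideanSpace.norm_single, Real.norm_eq_abs, abs_of_nonneg hd0, hd, dist_eq_norm,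
      norm_sub_rev]
  set e := Submodule.reflection (ℝ ∙ ((b - a) - EuclideanSpace.single (1 : Fin 2) d))ᗮ with he
  have heba : e (b - a) = EuclideanSpace.single (1 : Fin 2) d := Submodule.reflection_sub hnorm
  have hrot : ⇑e ⁻¹' (closedBall (EuclideanSpace.single (1 : Fin 2) d) r \ closedBall 0 r)
      = closedBall (b - a) r \ closedBall 0 r := by
    ext x
    have h1 : dist (e x) (EuclideanSpace.single (1 : Fin 2) d) = dist x (b - a) := by
      rw [← heba, e.dist_map]
    have h2 : dist (e x) 0 = dist x 0 := by
      calc dist (e x) 0 = dist (e x) (e 0) := by rw [map_zero]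
        _ = dist x 0 := e.dist_map _ _
    simp only [mem_preimage, mem_diff, mem_closedBall, h1, h2]
  rw [hvol1, ← hrot, (e.measurePreserving).measure_preimage
      (measurableSet_closedBall.diff measurableSet_closedBall).nullMeasurableSet]
  exact lune_zero d r hr hd0

lemma vol_closedBall_le (x : EuclideanSpace ℝ (Fin 2)) (r : ℝ) :
    volume (closedBall x r) ≤ ENNReal.ofReal (π * r ^ 2) := by
  rw [EuclideanSpace.volume_closedBall]
  simp only [Fintype.card_fin]
  rcases le_or_gt r 0 with hr | hr
  · rcases eq_or_lt_of_le hr with rfl | hr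
    · simp [Real.sq_sqrt Real.pi_nonneg, Real.Gamma_two]
    · simp [ENNReal.ofReal_eq_zero.2 hr.le]
  · have : ((2:ℕ):ℝ)/2 + 1 = 2 := by norm_num
    rw [this, Real.Gamma_two, Real.sq_sqrt Real.pi_nonneg,
      ← ENNReal.ofReal_pow hr.le, ← ENNReal.ofReal_mul (by positivity)]
    apply ENNReal.ofReal_le_ofReal
    nlinarith [Real.pi_nonneg]

lemma chain (c : ℕ → EuclideanSpace ℝ (Fin 2)) (r : ℝ) (hr : 0 ≤ r) (n : ℕ) :
    volume (⋃ i ∈ Finset.range (n + 1), closedBall (c i) r)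
      ≤ ENNReal.ofReal (π * r ^ 2)
        + ∑ i ∈ Finset.range n, ENNReal.ofReal (2 * r * dist (c i) (c (i + 1))) := by
  induction n with
  | zero => simpa using vol_closedBall_le (c 0) r
  | succ n ih =>
    have hsub : (⋃ i ∈ Finset.range (n + 2), closedBall (c i) r)
        ⊆ (⋃ i ∈ Finset.range (n + 1), closedBall (c i) r)
          ∪ (closedBall (c (n + 1)) r \ closedBall (c n) r) := by
      intro x hx
      simp only [Set.mem_iUnion, Finset.mem_range] at hx
      obtain ⟨i, hi, hxi⟩ := hx
      rcases lt_or_eq_of_le (Nat.lt_succ_iff.mp hi) with hi' | rfl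
      · exact Or.inl (Set.mem_iUnion₂.2 ⟨i, Finset.mem_range.2 (by omega), hxi⟩)
      · by_cases hxn : x ∈ closedBall (c n) r
        · exact Or.inl (Set.mem_iUnion₂.2 ⟨n, Finset.mem_range.2 (by omega), hxn⟩)
        · exact Or.inr ⟨hxi, hxn⟩
    calc volume (⋃ i ∈ Finset.range (n + 2), closedBall (c i) r)
        ≤ volume (⋃ i ∈ Finset.range (n + 1), closedBall (c i) r)
          + volume (closedBall (c (n + 1)) r \ closedBall (c n) r) :=
          (measure_mono hsub).trans (measure_union_le _ _)
      _ ≤ (ENNReal.ofReal (π * r ^ 2)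
            + ∑ i ∈ Finset.range n, ENNReal.ofReal (2 * r * dist (c i) (c (i + 1))))
          + ENNReal.ofReal (2 * r * dist (c n) (c (n + 1))) :=
          add_le_add ih (lune _ _ r hr)
      _ = _ := by rw [Finset.sum_range_succ, add_assoc]

open Classical in
noncomputable def tauSeq (v : ℝ → ℝ) (ε : ℝ) : ℕ → ℝ
  | 0 => 0
  | (i + 1) => if h : ∃ t ∈ Set.Icc (0:ℝ) 1, ((i:ℝ) + 1) * ε ≤ v t ∧ v t < ((i:ℝ) + 2) * ε
      then h.choose else tauSeq v ε i

lemma tauSeq_mem (v : ℝ → ℝ) (ε : ℝ) (i : ℕ) : tauSeq v ε i ∈ Icc (0:ℝ) 1 := by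
  induction i with
  | zero => exact ⟨le_refl 0, zero_le_one⟩
  | succ i ih =>
    rw [tauSeq]
    split_ifs with h
    · exact h.choose_spec.1
    · exact ih

lemma tauSeq_lt (v : ℝ → ℝ) (ε : ℝ) (hε : 0 < ε) (hv0 : v 0 = 0) (i : ℕ) :
    v (tauSeq v ε i) < ((i:ℝ) + 1) * ε := by
  induction i with
  | zero => rw [tauSeq, hv0]; simpa using hε
  | succ i ih =>
    rw [tauSeq]
    split_ifs with h
    · have := h.choose_spec.2.2; push_cast; linarith
    · push_cast; nlinarith

lemma tauSeq_good (v : ℝ → ℝ) (ε : ℝ) (hε : 0 < ε) (hv0 : v 0 = 0) (i : ℕ)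
    (h : ∃ t ∈ Set.Icc (0:ℝ) 1, (i:ℝ) * ε ≤ v t ∧ v t < ((i:ℝ) + 1) * ε) :
    (i:ℝ) * ε ≤ v (tauSeq v ε i) := by
  cases i with
  | zero => simp [tauSeq, hv0]
  | succ i =>
    rw [tauSeq]
    have h' : ∃ t ∈ Set.Icc (0:ℝ) 1, ((i:ℝ) + 1) * ε ≤ v t ∧ v t < ((i:ℝ) + 2) * ε := by
      obtain ⟨t, ht, h1, h2⟩ := h
      exact ⟨t, ht, by push_cast at h1 ⊢; linarith, by push_cast at h2 ⊢; linarith⟩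
    rw [dif_pos h']
    have := h'.choose_spec.2.1
    push_cast
    linarith

lemma tauSeq_mono (v : ℝ → ℝ) (ε : ℝ) (hε : 0 < ε) (hv0 : v 0 = 0) :
    Monotone (fun i => v (tauSeq v ε i)) := by
  apply monotone_nat_of_le_succ
  intro i
  show v (tauSeq v ε i) ≤ v (tauSeq v ε (i + 1))
  rw [tauSeq]
  split_ifs with h
  · have h1 := h.choose_spec.2.1
    have h2 := tauSeq_lt v ε hε hv0 i
    push_cast at h1; linarith
  · exact le_refl _

/-- The area swept by a disk of radius `ρ` centered on a closed rectifiable curve of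
length `L` is at most `2ρL + πρ²`. -/
theorem stmt_0 (γ : ℝ → EuclideanSpace ℝ (Fin 2)) (L ρ : ℝ) (hρ : 0 < ρ)
    (hcont : ContinuousOn γ (Icc 0 1))
    (hclosed : γ 0 = γ 1)
    (hrect : eVariationOn γ (Icc 0 1) ≠ ⊤)
    (hlen : (eVariationOn γ (Icc 0 1)).toReal = L) :
    volume {x : EuclideanSpace ℝ (Fin 2) | infDist x (γ '' Icc 0 1) ≤ ρ} ≤
      ENNReal.ofReal (2 * ρ * L + π * ρ ^ 2) := by
  have hL0 : 0 ≤ L := hlen ▸ ENNReal.toReal_nonneg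
  have h0m : (0:ℝ) ∈ Icc (0:ℝ) 1 := ⟨le_refl 0, zero_le_one⟩
  have h1m : (1:ℝ) ∈ Icc (0:ℝ) 1 := ⟨zero_le_one, le_refl 1⟩
  have hbv : LocallyBoundedVariationOn γ (Icc 0 1) := fun x y _ _ =>
    ne_top_of_le_ne_top hrect (eVariationOn.mono γ inter_subset_left)
  set v : ℝ → ℝ := variationOnFromTo γ (Icc 0 1) 0 with hv
  have hv0 : v 0 = 0 := variationOnFromTo.self γ _ 0
  have hvmono : MonotoneOn v (Icc 0 1) := variationOnFromTo.monotoneOn hbv h0m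
  have hv1 : v 1 = L := by
    show variationOnFromTo γ (Icc 0 1) 0 1 = L
    rw [variationOnFromTo.eq_of_le γ _ zero_le_one, Set.inter_self]
    exact hlen
  have hdist : ∀ a ∈ Icc (0:ℝ) 1, ∀ b ∈ Icc (0:ℝ) 1, dist (γ a) (γ b) ≤ |v b - v a| := by
    have key : ∀ a ∈ Icc (0:ℝ) 1, ∀ b ∈ Icc (0:ℝ) 1, a ≤ b →
        dist (γ a) (γ b) ≤ v b - v a := by
      intro a ha b hb hab
      have h2 : v a + variationOnFromTo γ (Icc 0 1) a b = v b :=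
        variationOnFromTo.add hbv h0m ha hb
      have h1 : dist (γ a) (γ b) ≤ variationOnFromTo γ (Icc 0 1) a b := by
        rw [variationOnFromTo.eq_of_le γ _ hab]
        exact BoundedVariationOn.dist_le
          (hbv a b ha hb) ⟨ha, le_refl a, hab⟩ ⟨hb, hab, le_refl b⟩
      linarith
    intro a ha b hb
    rcases le_total a b with hab | hab
    · exact (key a ha b hb hab).trans (le_abs_self _)
    · rw [dist_comm, abs_sub_comm]
      exact (key b hb a ha hab).trans (le_abs_self _)
  have keyvol : ∀ ε : ℝ, 0 < ε →
      volume {x : EuclideanSpace ℝ (Fin 2) | infDist x (γ '' Icc 0 1) ≤ ρ} ≤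
        ENNReal.ofReal (2 * (ρ + ε) * L + π * (ρ + ε) ^ 2) := by
    intro ε hε
    set r : ℝ := ρ + ε with hrdef
    have hr : 0 ≤ r := by positivity
    set τ : ℕ → ℝ := tauSeq v ε with hτ
    set c : ℕ → EuclideanSpace ℝ (Fin 2) := fun i => γ (τ i) with hc
    set n : ℕ := ⌊L / ε⌋₊ with hn
    have hwmono := tauSeq_mono v ε hε hv0
    -- covering
    have hcover : {x : EuclideanSpace ℝ (Fin 2) | infDist x (γ '' Icc 0 1) ≤ ρ}
        ⊆ ⋃ i ∈ Finset.range (n + 1), closedBall (c i) r := by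
      intro x hx
      have hcomp : IsCompact (γ '' Icc 0 1) := isCompact_Icc.image_of_continuousOn hcont
      have hne : (γ '' Icc 0 1).Nonempty := ⟨γ 0, mem_image_of_mem _ h0m⟩
      obtain ⟨y, hy, hxy⟩ := hcomp.exists_infDist_eq_dist hne x
      obtain ⟨t, ht, rfl⟩ := hy
      have hvt0 : 0 ≤ v t := variationOnFromTo.nonneg_of_le γ _ ht.1
      have hvtL : v t ≤ L := hv1 ▸ hvmono ht h1m ht.2
      set i : ℕ := ⌊v t / ε⌋₊ with hi
      have hi1 : (i : ℝ) * ε ≤ v t := by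
        rw [← le_div_iff₀ hε]
        exact Nat.floor_le (div_nonneg hvt0 hε.le)
      have hi2 : v t < ((i : ℝ) + 1) * ε := by
        rw [← div_lt_iff₀ hε]
        exact Nat.lt_floor_add_one _
      have higood := tauSeq_good v ε hε hv0 i ⟨t, ht, hi1, hi2⟩
      have hilt := tauSeq_lt v ε hε hv0 i
      have hdisti : dist (γ t) (c i) ≤ ε := by
        refine (hdist t ht (τ i) (tauSeq_mem v ε i)).trans ?_
        rw [abs_le]
        constructor <;> [skip; skip] <;> nlinarith
      have hiin : i ∈ Finset.range (n + 1) := by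
        rw [Finset.mem_range, Nat.lt_succ_iff, hi, hn]
        exact Nat.floor_mono (by gcongr)
      refine Set.mem_iUnion₂.2 ⟨i, hiin, ?_⟩
      rw [mem_closedBall]
      calc dist x (c i) ≤ dist x (γ t) + dist (γ t) (c i) := dist_triangle _ _ _
        _ ≤ ρ + ε := add_le_add (hxy ▸ hx) hdisti
    -- sum bound
    have hsum : ∑ i ∈ Finset.range n, ENNReal.ofReal (2 * r * dist (c i) (c (i + 1)))
        ≤ ENNReal.ofReal (2 * r * L) := by
      calc ∑ i ∈ Finset.range n, ENNReal.ofReal (2 * r * dist (c i) (c (i + 1)))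
          ≤ ∑ i ∈ Finset.range n, ENNReal.ofReal (2 * r * (v (τ (i + 1)) - v (τ i))) := by
            apply Finset.sum_le_sum
            intro i _
            apply ENNReal.ofReal_le_ofReal
            have hd := hdist (τ i) (tauSeq_mem v ε i) (τ (i + 1)) (tauSeq_mem v ε (i + 1))
            have hm : v (τ i) ≤ v (τ (i + 1)) := hwmono (Nat.le_succ i)
            rw [abs_of_nonneg (by linarith)] at hd
            nlinarith
        _ = ENNReal.ofReal (∑ i ∈ Finset.range n, 2 * r * (v (τ (i + 1)) - v (τ i))) := by
            rw [ENNReal.ofReal_sum_of_nonneg]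
            intro i _
            have hm : v (τ i) ≤ v (τ (i + 1)) := hwmono (Nat.le_succ i)
            nlinarith
        _ ≤ ENNReal.ofReal (2 * r * L) := by
            apply ENNReal.ofReal_le_ofReal
            rw [← Finset.mul_sum, Finset.sum_range_sub (fun i => v (τ i))]
            have hτ0 : τ 0 = 0 := rfl
            have hwn : v (τ n) ≤ L := hv1 ▸ hvmono (tauSeq_mem v ε n) h1m (tauSeq_mem v ε n).2
            rw [hτ0, hv0]
            nlinarith
    calc volume {x : EuclideanSpace ℝ (Fin 2) | infDist x (γ '' Icc 0 1) ≤ ρ}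
        ≤ volume (⋃ i ∈ Finset.range (n + 1), closedBall (c i) r) := measure_mono hcover
      _ ≤ ENNReal.ofReal (π * r ^ 2)
          + ∑ i ∈ Finset.range n, ENNReal.ofReal (2 * r * dist (c i) (c (i + 1))) :=
          chain c r hr n
      _ ≤ ENNReal.ofReal (π * r ^ 2) + ENNReal.ofReal (2 * r * L) := by gcongr
      _ = ENNReal.ofReal (2 * r * L + π * r ^ 2) := by
          rw [← ENNReal.ofReal_add (by positivity) (by positivity), add_comm]
      _ = ENNReal.ofReal (2 * (ρ + ε) * L + π * (ρ + ε) ^ 2) := rfl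
  -- pass to limit ε → 0⁺
  have htend : Filter.Tendsto (fun ε : ℝ => ENNReal.ofReal (2 * (ρ + ε) * L + π * (ρ + ε) ^ 2))
      (nhdsWithin 0 (Ioi 0)) (nhds (ENNReal.ofReal (2 * ρ * L + π * ρ ^ 2))) := by
    have hcontf : Continuous fun ε : ℝ => 2 * (ρ + ε) * L + π * (ρ + ε) ^ 2 := by fun_prop
    have h1 : Filter.Tendsto (fun ε : ℝ => 2 * (ρ + ε) * L + π * (ρ + ε) ^ 2)
        (nhdsWithin 0 (Ioi 0)) (nhds (2 * ρ * L + π * ρ ^ 2)) := by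
      have := hcontf.tendsto 0
      simp only [add_zero] at this
      exact this.mono_left nhdsWithin_le_nhds
    exact (ENNReal.continuous_ofReal.tendsto _).comp h1
  exact ge_of_tendsto htend (eventually_nhdsWithin_of_forall fun ε hε => keyvol ε hε)
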